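/- Suppose F : X × Y → ℝ with X ⊆ ℝ^n closed convex, F(·, y) is L-weakly convex on X for each y ∈ Y, F(x, ·) is concave on the convex set Y, and ∇_y F is L-Lipschitz jointly in (x, y). Let r > L and x_r(y, z) = argmin_{x ∈ X} {F(x, y) + (r/2)‖x − z‖²}. Then for any z and y, y′ ∈ Y: ‖x_r(y, z) − x_r(y′, z)‖ ≤ (2(r+L)/(r−L))‖y − y′‖. -/

import Mathlib

open scoped RealInnerProductSpace

section Aux

variable {E : Type*} [NormedAddCommGroup E] [InnerProductSpace ℝ E] [CompleteSpace E]

/-- Supergradient inequality for a concave function on a convex set. -/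
lemma concave_supergrad {Y : Set E} {h : E → ℝ} {g : E}
    (hc : ConcaveOn ℝ Y h) {u v : E} (hu : u ∈ Y) (hv : v ∈ Y)
    (hg : HasGradientAt h g v) : h u ≤ h v + ⟪g, u - v⟫ := by
  have hφ : HasDerivAt (fun t : ℝ => v + t • (u - v)) (u - v) 0 := by
    simpa using ((hasDerivAt_id (0:ℝ)).smul_const (u - v)).const_add v
  have hF := hg.hasFDerivAt
  have hψ : HasDerivAt (fun t : ℝ => h (v + t • (u - v))) ⟪g, u - v⟫ 0 := by
    have : HasFDerivAt h ((InnerProductSpace.toDual ℝ E) g) (v + (0:ℝ) • (u - v)) := by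
      simpa using hF
    simpa [InnerProductSpace.toDual_apply_apply, Function.comp_def] using this.comp_hasDerivAt 0 hφ
  rw [hasDerivAt_iff_tendsto_slope] at hψ
  have hψ' : Filter.Tendsto (slope (fun t : ℝ => h (v + t • (u - v))) 0)
      (nhdsWithin 0 (Set.Ioi 0)) (nhds ⟪g, u - v⟫) :=
    hψ.mono_left (nhdsWithin_mono _ (fun t ht => ne_of_gt ht))
  have key : ∀ t ∈ Set.Ioc (0:ℝ) 1,
      h u - h v ≤ slope (fun t : ℝ => h (v + t • (u - v))) 0 t := by
    intro t ht
    have hcomb : (1 - t) • v + t • u = v + t • (u - v) := by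
      rw [smul_sub, sub_smul, one_smul]; abel
    have := hc.2 hv hu (by linarith [ht.2] : (0:ℝ) ≤ 1 - t) ht.1.le (by ring)
    rw [hcomb] at this
    rw [slope_def_field]
    simp only [zero_smul, add_zero, smul_eq_mul] at this ⊢
    rw [le_div_iff₀ (by simpa using ht.1 : (0:ℝ) < t - 0)]
    nlinarith [this]
  have hIoc : Set.Ioc (0:ℝ) 1 ∈ nhdsWithin (0:ℝ) (Set.Ioi 0) :=
    Ioc_mem_nhdsGT_of_mem ⟨le_refl 0, zero_lt_one⟩
  have := ge_of_tendsto hψ' (Filter.eventually_of_mem hIoc key)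
  linarith

lemma quad_midpoint (r L : ℝ) (a b z : E) :
    r / 2 * ‖((1:ℝ)/2) • a + ((1:ℝ)/2) • b - z‖ ^ 2
      - L / 2 * ‖((1:ℝ)/2) • a + ((1:ℝ)/2) • b‖ ^ 2
    = 1/2 * (r / 2 * ‖a - z‖ ^ 2 - L / 2 * ‖a‖ ^ 2)
      + 1/2 * (r / 2 * ‖b - z‖ ^ 2 - L / 2 * ‖b‖ ^ 2)
      - (r - L) / 8 * ‖a - b‖ ^ 2 := by
  simp only [← real_inner_self_eq_norm_sq]
  simp only [inner_sub_left, inner_sub_right, inner_add_left, inner_add_right,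
    real_inner_smul_left, real_inner_smul_right, real_inner_comm b a,
    real_inner_comm z a, real_inner_comm z b]
  ring

end Aux

set_option maxHeartbeats 1000000 in
/-- Lipschitz continuity in `y` of the proximal map
`x_r(y, z) = argmin_{x ∈ X} { F(x,y) + (r/2)‖x - z‖² }`:
`‖x_r(y,z) - x_r(y',z)‖ ≤ 2(r+L)/(r-L) ‖y - y'‖`. -/
theorem prox_map_lipschitz_in_y (n d : ℕ) (X : Set (EuclideanSpace ℝ (Fin n)))
    (Y : Set (EuclideanSpace ℝ (Fin d)))
    (F : EuclideanSpace ℝ (Fin n) → EuclideanSpace ℝ (Fin d) → ℝ)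
    (Gy : EuclideanSpace ℝ (Fin n) → EuclideanSpace ℝ (Fin d) → EuclideanSpace ℝ (Fin d))
    (L r : ℝ) (y y' : EuclideanSpace ℝ (Fin d)) (z x1 x2 : EuclideanSpace ℝ (Fin n))
    (hX : IsClosed X) (hXc : Convex ℝ X) (hYc : Convex ℝ Y)
    (hwc : ∀ y ∈ Y, ConvexOn ℝ X (fun x => F x y + L / 2 * ‖x‖ ^ 2))
    (hconc : ∀ x ∈ X, ConcaveOn ℝ Y (fun y => F x y))
    (hgrad : ∀ x y, HasGradientAt (F x) (Gy x y) y)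
    (hlip : ∀ x x' y y', ‖Gy x y - Gy x' y'‖ ≤ L * Real.sqrt (‖x - x'‖ ^ 2 + ‖y - y'‖ ^ 2))
    (hr : L < r) (hy : y ∈ Y) (hy' : y' ∈ Y)
    (hx1 : x1 ∈ X) (hmin1 : IsMinOn (fun x => F x y + r / 2 * ‖x - z‖ ^ 2) X x1)
    (hx2 : x2 ∈ X) (hmin2 : IsMinOn (fun x => F x y' + r / 2 * ‖x - z‖ ^ 2) X x2) :
    ‖x1 - x2‖ ≤ 2 * (r + L) / (r - L) * ‖y - y'‖ := by
  set m : EuclideanSpace ℝ (Fin n) := ((1:ℝ)/2) • x1 + ((1:ℝ)/2) • x2 with hm_def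
  have hm : m ∈ X := hXc hx1 hx2 (by norm_num) (by norm_num) (by norm_num)
  have hq := quad_midpoint r L x1 x2 z
  -- strong convexity at the two minimizers
  have hc1 := (hwc y hy).2 hx1 hx2 (by norm_num : (0:ℝ) ≤ 1/2) (by norm_num : (0:ℝ) ≤ 1/2)
    (by norm_num)
  have hc2 := (hwc y' hy').2 hx1 hx2 (by norm_num : (0:ℝ) ≤ 1/2) (by norm_num : (0:ℝ) ≤ 1/2)
    (by norm_num)
  simp only [smul_eq_mul] at hc1 hc2
  have hmin1' : F x1 y + r / 2 * ‖x1 - z‖ ^ 2 ≤ F m y + r / 2 * ‖m - z‖ ^ 2 :=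
    isMinOn_iff.mp hmin1 m hm
  have hmin2' : F x2 y' + r / 2 * ‖x2 - z‖ ^ 2 ≤ F m y' + r / 2 * ‖m - z‖ ^ 2 :=
    isMinOn_iff.mp hmin2 m hm
  have h1 : (r - L) / 4 * ‖x1 - x2‖ ^ 2
      ≤ (F x2 y + r / 2 * ‖x2 - z‖ ^ 2) - (F x1 y + r / 2 * ‖x1 - z‖ ^ 2) := by
    linarith [hmin1', hq, hc1]
  have h2 : (r - L) / 4 * ‖x1 - x2‖ ^ 2
      ≤ (F x1 y' + r / 2 * ‖x1 - z‖ ^ 2) - (F x2 y' + r / 2 * ‖x2 - z‖ ^ 2) := by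
    linarith [hmin2', hq, hc2]
  by_cases hyy : y = y'
  · subst hyy
    simp only [sub_self, norm_zero, mul_zero]
    have hd2 : (r - L) / 2 * ‖x1 - x2‖ ^ 2 ≤ 0 := by linarith
    have h3 : ‖x1 - x2‖ ^ 2 = 0 :=
      le_antisymm (by nlinarith [hd2, hr]) (sq_nonneg _)
    rw [pow_eq_zero_iff two_ne_zero] at h3
    rw [h3]
  · have hδ : 0 < ‖y - y'‖ := by
      rw [norm_pos_iff]; exact sub_ne_zero_of_ne hyy
    have hL : 0 ≤ L := by
      have h := hlip x1 x1 y y'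
      rw [sub_self, norm_zero] at h
      have hsq : Real.sqrt ((0:ℝ) ^ 2 + ‖y - y'‖ ^ 2) = ‖y - y'‖ := by
        rw [show (0:ℝ) ^ 2 + ‖y - y'‖ ^ 2 = ‖y - y'‖ ^ 2 by ring,
          Real.sqrt_sq (norm_nonneg _)]
      rw [hsq] at h
      nlinarith [norm_nonneg (Gy x1 y - Gy x1 y'), h, hδ]
    -- concavity supergradient bounds
    have hg1 : F x2 y ≤ F x2 y' + ⟪Gy x2 y', y - y'⟫ :=
      concave_supergrad (hconc x2 hx2) hy hy' (hgrad x2 y')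
    have hg2 : F x1 y' ≤ F x1 y + ⟪Gy x1 y, y' - y⟫ :=
      concave_supergrad (hconc x1 hx1) hy' hy (hgrad x1 y)
    have hib : ⟪Gy x2 y', y - y'⟫ + ⟪Gy x1 y, y' - y⟫
        ≤ ‖Gy x2 y' - Gy x1 y‖ * ‖y - y'‖ := by
      have heq : ⟪Gy x2 y', y - y'⟫ + ⟪Gy x1 y, y' - y⟫
          = ⟪Gy x2 y' - Gy x1 y, y - y'⟫ := by
        simp only [inner_sub_left, inner_sub_right]; ring
      rw [heq]
      exact real_inner_le_norm _ _
    have hs : Real.sqrt (‖x2 - x1‖ ^ 2 + ‖y' - y‖ ^ 2) ≤ ‖x1 - x2‖ + ‖y - y'‖ := by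
      rw [norm_sub_rev x2 x1, norm_sub_rev y' y]
      have hle : ‖x1 - x2‖ ^ 2 + ‖y - y'‖ ^ 2 ≤ (‖x1 - x2‖ + ‖y - y'‖) ^ 2 := by
        nlinarith [mul_nonneg (norm_nonneg (x1 - x2)) (norm_nonneg (y - y'))]
      calc Real.sqrt (‖x1 - x2‖ ^ 2 + ‖y - y'‖ ^ 2)
          ≤ Real.sqrt ((‖x1 - x2‖ + ‖y - y'‖) ^ 2) := Real.sqrt_le_sqrt hle
        _ = ‖x1 - x2‖ + ‖y - y'‖ := Real.sqrt_sq (by positivity)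
    have hlip' := hlip x2 x1 y' y
    have hnb : ‖Gy x2 y' - Gy x1 y‖ ≤ L * (‖x1 - x2‖ + ‖y - y'‖) :=
      hlip'.trans (mul_le_mul_of_nonneg_left hs hL)
    have hnb' : ‖Gy x2 y' - Gy x1 y‖ * ‖y - y'‖
        ≤ L * (‖x1 - x2‖ + ‖y - y'‖) * ‖y - y'‖ :=
      mul_le_mul_of_nonneg_right hnb (norm_nonneg (y - y'))
    have key : (r - L) / 2 * ‖x1 - x2‖ ^ 2
        ≤ L * (‖x1 - x2‖ + ‖y - y'‖) * ‖y - y'‖ := by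
      linarith [h1, h2, hg1, hg2, hib, hnb']
    rw [div_mul_eq_mul_div, le_div_iff₀ (by linarith : (0:ℝ) < r - L)]
    by_contra hcon
    push_neg at hcon
    have c1 := mul_lt_mul_of_pos_right hcon hδ
    have c2 := mul_le_mul_of_nonneg_right hcon.le (norm_nonneg (x1 - x2))
    nlinarith [key, c1, c2, hL, hδ, hr, norm_nonneg (x1 - x2), mul_pos hδ hδ,
      mul_nonneg hL hδ.le, mul_nonneg (norm_nonneg (x1 - x2)) hδ.le]
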